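/- Let N ≥ 2, K = 2, θ₁ > θ₂ > 0, and P₁ ∈ (0,1). With α_m defined as α_m = (1/(N+1))·[1/θ₂ − (H^{N+1}_{≥ m}(P₁) + (N−m)·H^{N+1}_m(P₁))·(1/θ₂ − 1/θ₁)], for every m ∈ {1,…,N−1}: α_{m+1} − α_m ≥ 0 if and only if P₁ ≤ (m+1)/N. -/

import Mathlib

open Set

/-- `H N m t = C(N,m) t^m (1-t)^(N-m)`. -/
noncomputable def H (N m : ℕ) (t : ℝ) : ℝ := (N.choose m : ℝ) * t ^ m * (1 - t) ^ (N - m)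

/-- Upper tail `H^{N}_{≥ m}(t) = Σ_{j=m}^{N} H N j t`. -/
noncomputable def Hge (N m : ℕ) (t : ℝ) : ℝ := ∑ j ∈ Finset.Icc m N, H N j t

/-- The coefficient of prize `m` in the two-type (`K = 2`) linear-cost environment. -/
noncomputable def alphaTwo (N : ℕ) (θ₁ θ₂ P₁ : ℝ) (m : ℕ) : ℝ :=
  (1 / (N + 1)) * (1 / θ₂ -
    (Hge (N + 1) m P₁ + ((N : ℝ) - m) * H (N + 1) m P₁) * (1 / θ₂ - 1 / θ₁))

theorem two_type_adjacent_transfer (N : ℕ) (hN : 2 ≤ N)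
    (θ₁ θ₂ P₁ : ℝ) (hθ : θ₂ < θ₁) (hθ₂ : 0 < θ₂) (hP₁ : P₁ ∈ Ioo (0:ℝ) 1)
    (m : ℕ) (hm1 : 1 ≤ m) (hm : m ≤ N - 1) :
    0 ≤ alphaTwo N θ₁ θ₂ P₁ (m + 1) - alphaTwo N θ₁ θ₂ P₁ m ↔ P₁ ≤ (m + 1) / N := by
  obtain ⟨ht0, ht1⟩ := hP₁
  obtain ⟨k, hk⟩ : ∃ k, N = m + 1 + k := ⟨N - (m + 1), by omega⟩
  subst hk
  set t := P₁ with htdef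
  have h1t : (0:ℝ) < 1 - t := by linarith
  have hθ₁ : (0:ℝ) < θ₁ := lt_trans hθ₂ hθ
  have hc : (0:ℝ) < 1 / θ₂ - 1 / θ₁ := by
    have := one_div_lt_one_div_of_lt hθ₂ hθ
    linarith
  have hsplit : Hge (m+1+k+1) m t = H (m+1+k+1) m t + Hge (m+1+k+1) (m+1) t := by
    unfold Hge
    rw [show Finset.Icc m (m+1+k+1) = insert m (Finset.Icc (m+1) (m+1+k+1)) by
      ext x; simp [Finset.mem_Icc]; omega]
    rw [Finset.sum_insert (by simp [Finset.mem_Icc])]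
  have hHm : H (m+1+k+1) m t = ((m+1+k+1).choose m : ℝ) * t ^ m * (1 - t) ^ (k+2) := by
    unfold H; rw [show m+1+k+1 - m = k+2 by omega]
  have hHm1 : H (m+1+k+1) (m+1) t
      = ((m+1+k+1).choose (m+1) : ℝ) * t ^ (m+1) * (1 - t) ^ (k+1) := by
    unfold H; rw [show m+1+k+1 - (m+1) = k+1 by omega]
  set Cm : ℝ := ((m+1+k+1).choose m : ℝ) with hCm
  set Cm1 : ℝ := ((m+1+k+1).choose (m+1) : ℝ) with hCm1
  have hCC : Cm1 * ((m:ℝ)+1) = Cm * ((k:ℝ)+2) := by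
    have h := Nat.choose_succ_right_eq (m+1+k+1) m
    rw [show m+1+k+1 - m = k+2 by omega] at h
    rw [hCm, hCm1]
    exact_mod_cast h
  have hCmpos : (0:ℝ) < Cm := by
    rw [hCm]
    exact_mod_cast Nat.choose_pos (by omega : m ≤ m+1+k+1)
  have hdiff : alphaTwo (m+1+k) θ₁ θ₂ t (m + 1) - alphaTwo (m+1+k) θ₁ θ₂ t m
      = (1 / ((m:ℝ)+1+k+1)) * (1 / θ₂ - 1 / θ₁) * (t ^ m * (1 - t) ^ (k+1))
        * (((k:ℝ)+2) * Cm * (1 - t) - (k:ℝ) * Cm1 * t) := by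
    unfold alphaTwo
    rw [hsplit, hHm, hHm1]
    push_cast
    ring
  have hpos : (0:ℝ) < (1 / ((m:ℝ)+1+k+1)) * (1 / θ₂ - 1 / θ₁) * (t ^ m * (1 - t) ^ (k+1)) := by
    have h1 : (0:ℝ) < 1 / ((m:ℝ)+1+k+1) := by positivity
    have h2 : (0:ℝ) < t ^ m * (1 - t) ^ (k+1) := by
      exact mul_pos (pow_pos ht0 m) (pow_pos h1t (k+1))
    exact mul_pos (mul_pos h1 hc) h2
  rw [hdiff, mul_nonneg_iff_of_pos_left hpos]
  have hNpos : (0:ℝ) < ((m+1+k : ℕ) : ℝ) := by push_cast; positivity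
  rw [le_div_iff₀ hNpos]
  have key : ((m:ℝ)+1) * (((k:ℝ)+2) * Cm * (1 - t) - (k:ℝ) * Cm1 * t)
      = ((k:ℝ)+2) * Cm * (((m:ℝ)+1) - ((m:ℝ)+1+k) * t) := by
    linear_combination (-(k:ℝ) * t) * hCC
  push_cast
  have h3 : (0:ℝ) < ((k:ℝ)+2) * Cm := by positivity
  have hm1pos : (0:ℝ) < (m:ℝ)+1 := by positivity
  constructor
  · intro h
    have h2 : (0:ℝ) ≤ ((k:ℝ)+2) * Cm * (((m:ℝ)+1) - ((m:ℝ)+1+k) * t) := by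
      rw [← key]; exact mul_nonneg (le_of_lt hm1pos) h
    have h4 := (mul_nonneg_iff_of_pos_left h3).mp h2
    linarith
  · intro h
    have h2 : (0:ℝ) ≤ ((k:ℝ)+2) * Cm * (((m:ℝ)+1) - ((m:ℝ)+1+k) * t) :=
      mul_nonneg (le_of_lt h3) (by linarith)
    rw [← key] at h2
    exact (mul_nonneg_iff_of_pos_left hm1pos).mp h2
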